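/- In any labelled transition system with concurrency, if for every state only countably many non-blocking transitions (transitions in Tr•_{¬B}) have that state as their source, then B-justness is feasible: every finite path can be extended into a B-just path. -/

import Mathlib

open scoped Classical

/-- A labelled transition system with distinguished sets `Rec ⊆ Act` of labels. -/
structure LTS (S Tr L : Type) where
  source : Tr → S
  target : Tr → S
  label : Tr → L
  Act : Set L
  Rec : Set L
  rec_sub : Rec ⊆ Act

/-- `Tr•`: the transitions whose label is in `Act ∖ Rec`. -/
def LTS.TrB {S Tr L : Type} (lts : LTS S Tr L) : Set Tr :=
  {t | lts.label t ∈ lts.Act ∧ lts.label t ∉ lts.Rec}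

/-- A path: an alternating sequence of states and transitions, with matching sources and
targets and labels in `Act`, either infinite (`len = ⊤`) or ending in a state (`len = n`).
`states i` and `trans i` are meaningful for `i ≤ len`, resp. `i < len`. -/
structure LTS.Path {S Tr L : Type} (lts : LTS S Tr L) where
  len : ℕ∞
  states : ℕ → S
  trans : ℕ → Tr
  src_eq : ∀ i : ℕ, (i : ℕ∞) < len → lts.source (trans i) = states i
  tgt_eq : ∀ i : ℕ, (i : ℕ∞) < len → lts.target (trans i) = states (i + 1)
  lab_act : ∀ i : ℕ, (i : ℕ∞) < len → lts.label (trans i) ∈ lts.Act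

/-- A labelled transition system with concurrency: a relation `⌣•` on `Tr• × Tr`
satisfying irreflexivity (on `Tr•`) and the closure property (2). -/
structure LTSC (S Tr L : Type) extends LTS S Tr L where
  conc : Tr → Tr → Prop
  conc_irrefl : ∀ t ∈ toLTS.TrB, ¬ conc t t
  conc_closure : ∀ t ∈ toLTS.TrB, ∀ π : toLTS.Path, ∀ n : ℕ,
    π.len = (n : ℕ∞) → π.states 0 = toLTS.source t →
    (∀ i : ℕ, i < n → conc t (π.trans i)) →
    ∃ u ∈ toLTS.TrB, toLTS.source u = π.states n ∧
      toLTS.label u = toLTS.label t ∧ ¬ conc t u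

/-- A path is `B`-just if for each suffix (starting at position `k`) and each transition
`t ∈ Tr•` with `ℓ(t) ∉ B` enabled in the first state of that suffix, a transition `u`
with `¬ t ⌣• u` occurs in the suffix. -/
def LTSC.BJust {S Tr L : Type} (lts : LTSC S Tr L) (B : Set L)
    (π : lts.toLTS.Path) : Prop :=
  ∀ k : ℕ, (k : ℕ∞) ≤ π.len →
    ∀ t ∈ lts.toLTS.TrB, lts.label t ∉ B → lts.source t = π.states k →
      ∃ i : ℕ, k ≤ i ∧ (i : ℕ∞) < π.len ∧ ¬ lts.conc t (π.trans i)

/-- `ρ` extends `π`: they agree on the (finite) part `π` and `ρ` is at least as long. -/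
def LTS.Path.Extends {S Tr L : Type} {lts : LTS S Tr L} (ρ π : lts.Path) : Prop :=
  π.len ≤ ρ.len ∧ (∀ i : ℕ, (i : ℕ∞) ≤ π.len → ρ.states i = π.states i) ∧
  (∀ i : ℕ, (i : ℕ∞) < π.len → ρ.trans i = π.trans i)

/-! ### Auxiliary development for the feasibility theorem -/

/-- Scheduling: first component of the inner unpairing. Each pair `(k, j)` is the value
of `skF`, `sjF` at infinitely many `m`, namely all `m = Nat.pair (Nat.pair k j) b`. -/
def skF (m : ℕ) : ℕ := (Nat.unpair (Nat.unpair m).1).1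
def sjF (m : ℕ) : ℕ := (Nat.unpair (Nat.unpair m).1).2

lemma skF_pair (k j b : ℕ) : skF (Nat.pair (Nat.pair k j) b) = k := by
  simp [skF]
lemma sjF_pair (k j b : ℕ) : sjF (Nat.pair (Nat.pair k j) b) = j := by
  simp [sjF]

/-- A context bundling all the data of the theorem. -/
structure Ctx (S Tr L : Type) where
  lts : LTSC S Tr L
  B : Set L
  hcount : ∀ s : S,
    {t : Tr | t ∈ lts.toLTS.TrB ∧ lts.label t ∉ B ∧ lts.source t = s}.Countable
  π : lts.toLTS.Path
  n : ℕ

namespace Ctx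

variable {S Tr L : Type} (c : Ctx S Tr L)

/-- The set of non-blocking transitions enabled in `s`. -/
def Enb (s : S) : Set Tr :=
  {t | t ∈ c.lts.toLTS.TrB ∧ c.lts.label t ∉ c.B ∧ c.lts.source t = s}

/-- A (partial) enumeration of `Enb s`. -/
noncomputable def enum (s : S) : ℕ → Option Tr :=
  if h : (c.Enb s).Nonempty then
    fun j => some (((c.hcount s).exists_eq_range h).choose j)
  else fun _ => none

lemma enum_mem {s : S} {t : Tr} {j : ℕ} (h : c.enum s j = some t) : t ∈ c.Enb s := by
  unfold enum at h
  split at h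
  · rename_i hne
    have hspec := ((c.hcount s).exists_eq_range hne).choose_spec
    have : t ∈ Set.range ((c.hcount s).exists_eq_range hne).choose :=
      ⟨j, Option.some.inj h⟩
    rw [show (c.Enb s) = Set.range ((c.hcount s).exists_eq_range hne).choose from hspec]
    exact this
  · simp at h

lemma enum_surj {s : S} {t : Tr} (h : t ∈ c.Enb s) : ∃ j, c.enum s j = some t := by
  have hne : (c.Enb s).Nonempty := ⟨t, h⟩
  have hspec := ((c.hcount s).exists_eq_range hne).choose_spec
  have : t ∈ Set.range ((c.hcount s).exists_eq_range hne).choose := by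
    rw [← show (c.Enb s) = _ from hspec]; exact h
  obtain ⟨j, hj⟩ := this
  exact ⟨j, by unfold enum; rw [dif_pos hne, hj]⟩

/-- The states along a partial run `f`, using `s` for the current position `n + m`. -/
def stLoc (f : ℕ → Option Tr × S) (m : ℕ) (s : S) (p : ℕ) : S :=
  if p < c.n + m then (if p ≤ c.n then c.π.states p else (f (p - c.n)).2) else s

/-- The transitions along a partial run `f`. -/
def trLoc (f : ℕ → Option Tr × S) (i : ℕ) : Option Tr :=
  if i < c.n then some (c.π.trans i) else (f (i - c.n)).1

/-- The current state after `m` steps of the run `f`. -/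
def curState (f : ℕ → Option Tr × S) : ℕ → S
  | 0 => c.π.states c.n
  | m + 1 =>
    match (f m).1 with
    | some u => c.lts.target u
    | none => (f m).2

/-- A good choice of next transition at step `m` in state `s`: it is a non-blocking
enabled transition, and moreover if the scheduled obligation `(skF m, sjF m)` is active
and not yet discharged, it discharges it. -/
def Good (f : ℕ → Option Tr × S) (m : ℕ) (s : S) (u : Tr) : Prop :=
  u ∈ c.lts.toLTS.TrB ∧ c.lts.label u ∉ c.B ∧ c.lts.source u = s ∧
  ∀ t, c.enum (c.stLoc f m s (skF m)) (sjF m) = some t →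
    skF m ≤ c.n + m →
    (∀ i, skF m ≤ i → i < c.n + m → ∃ v, c.trLoc f i = some v ∧ c.lts.conc t v) →
    ¬ c.lts.conc t u

/-- One step of the construction. -/
noncomputable def step (f : ℕ → Option Tr × S) (m : ℕ) : Option Tr × S :=
  ((if m ≠ 0 ∧ (f (m - 1)).1 = none then none
    else if h : ∃ u, c.Good f m (c.curState f m) u then some h.choose else none),
   c.curState f m)

/-- The first `m` steps of the run (junk past `m`). -/
noncomputable def P : ℕ → ℕ → Option Tr × S
  | 0 => fun _ => (none, c.π.states c.n)
  | m + 1 => fun i => if i = m then c.step (P m) m else P m i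

/-- The full run. -/
noncomputable def A (m : ℕ) : Option Tr × S := c.step (c.P m) m

lemma P_succ (m i : ℕ) :
    c.P (m + 1) i = if i = m then c.step (c.P m) m else c.P m i := rfl

lemma P_lt : ∀ {m i : ℕ}, i < m → c.P m i = c.A i := by
  intro m
  induction m with
  | zero => intro i h; omega
  | succ m ih =>
    intro i h
    by_cases hi : i = m
    · subst hi; rw [P_succ, if_pos rfl]; rfl
    · have h' : i < m := by omega
      rw [P_succ, if_neg hi]
      exact ih h'

lemma A_snd (m : ℕ) : (c.A m).2 = c.curState (c.P m) m := rfl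

/-- The states of the run. -/
noncomputable def rst (p : ℕ) : S :=
  if p ≤ c.n then c.π.states p else (c.A (p - c.n)).2

/-- The transitions of the run. -/
noncomputable def rtr (p : ℕ) : Option Tr :=
  if p < c.n then some (c.π.trans p) else (c.A (p - c.n)).1

lemma rst_A (m : ℕ) : c.rst (c.n + m) = (c.A m).2 := by
  cases m with
  | zero =>
    have h1 : c.rst (c.n + 0) = c.π.states c.n := by
      unfold rst; rw [if_pos (show c.n + 0 ≤ c.n by omega)]; norm_num
    rw [h1, A_snd]
    rfl
  | succ m =>
    unfold rst
    rw [if_neg (show ¬ (c.n + (m + 1) ≤ c.n) by omega),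
      show c.n + (m + 1) - c.n = m + 1 by omega]

lemma rtr_A (m : ℕ) : c.rtr (c.n + m) = (c.A m).1 := by
  unfold rtr
  rw [if_neg (show ¬ (c.n + m < c.n) by omega), show c.n + m - c.n = m by omega]

lemma A_some {m : ℕ} {u : Tr} (h : (c.A m).1 = some u) :
    c.Good (c.P m) m ((c.A m).2) u := by
  have h' : (c.step (c.P m) m).1 = some u := h
  unfold step at h'
  simp only at h'
  split at h'
  · simp at h'
  · split at h'
    · rename_i hg
      have := hg.choose_spec
      rw [← Option.some.inj h']
      exact this
    · simp at h'

lemma A_none {m : ℕ} (h : (c.A m).1 = none) (h0 : m = 0 ∨ (c.A (m - 1)).1 ≠ none) :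
    ¬ ∃ u, c.Good (c.P m) m ((c.A m).2) u := by
  intro hex
  have h' : (c.step (c.P m) m).1 = none := h
  unfold step at h'
  simp only at h'
  have hcond : ¬ (m ≠ 0 ∧ ((c.P m) (m - 1)).1 = none) := by
    rcases h0 with h0 | h0
    · intro hc; exact hc.1 h0
    · intro hc
      have : (c.P m) (m - 1) = c.A (m - 1) := c.P_lt (by omega)
      rw [this] at hc
      exact h0 hc.2
  have hex' : ∃ u, c.Good (c.P m) m (c.curState (c.P m) m) u := hex
  rw [if_neg hcond, dif_pos hex'] at h'
  simp at h'

lemma A_absorb {m m' : ℕ} (h : (c.A m).1 = none) (hm : m ≤ m') : (c.A m').1 = none := by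
  induction m' with
  | zero =>
    have : m = 0 := by omega
    subst this; exact h
  | succ m' ih =>
    by_cases hm' : m ≤ m'
    · have hprev := ih hm'
      show (c.step (c.P (m' + 1)) (m' + 1)).1 = none
      unfold step
      simp only
      rw [if_pos]
      constructor
      · omega
      · have : (c.P (m' + 1)) (m' + 1 - 1) = c.A m' := by
          have : m' + 1 - 1 = m' := by omega
          rw [this]; exact c.P_lt (by omega)
        rw [this]; exact hprev
    · have : m = m' + 1 := by omega
      subst this; exact h

lemma stLoc_rst {m p : ℕ} (hp : p ≤ c.n + m) :
    c.stLoc (c.P m) m (c.rst (c.n + m)) p = c.rst p := by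
  unfold stLoc
  by_cases h1 : p < c.n + m
  · rw [if_pos h1]
    by_cases h2 : p ≤ c.n
    · rw [if_pos h2]
      unfold rst
      rw [if_pos h2]
    · rw [if_neg h2, c.P_lt (show p - c.n < m by omega)]
      unfold rst
      rw [if_neg h2]
  · have : p = c.n + m := by omega
    rw [if_neg h1, this]

lemma trLoc_rtr {m i : ℕ} (hi : i < c.n + m) : c.trLoc (c.P m) i = c.rtr i := by
  unfold trLoc rtr
  by_cases h : i < c.n
  · rw [if_pos h, if_pos h]
  · rw [if_neg h, if_neg h, c.P_lt (show i - c.n < m by omega)]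

/-- Invariant: sources of the run's transitions. -/
lemma run_src (hfin : c.π.len = (c.n : ℕ∞)) {p : ℕ} {u : Tr} (h : c.rtr p = some u) :
    c.lts.source u = c.rst p := by
  by_cases hp : p < c.n
  · unfold rtr at h
    rw [if_pos hp] at h
    have hu : u = c.π.trans p := (Option.some.inj h).symm
    have hr : c.rst p = c.π.states p := by unfold rst; rw [if_pos (by omega)]
    rw [hu, hr]
    exact c.π.src_eq p (by rw [hfin]; exact_mod_cast hp)
  · set m := p - c.n with hm
    have hp' : p = c.n + m := by omega
    rw [hp', c.rtr_A] at h
    have hg := c.A_some h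
    rw [hp', c.rst_A]
    exact hg.2.2.1

/-- Invariant: targets of the run's transitions. -/
lemma run_tgt (hfin : c.π.len = (c.n : ℕ∞)) {p : ℕ} {u : Tr} (h : c.rtr p = some u) :
    c.rst (p + 1) = c.lts.target u := by
  by_cases hp : p < c.n
  · unfold rtr at h
    rw [if_pos hp] at h
    have hu : u = c.π.trans p := (Option.some.inj h).symm
    have hr : c.rst (p + 1) = c.π.states (p + 1) := by unfold rst; rw [if_pos (by omega)]
    rw [hu, hr]
    exact (c.π.tgt_eq p (by rw [hfin]; exact_mod_cast hp)).symm
  · set m := p - c.n with hm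
    have hp' : p = c.n + m := by omega
    rw [hp', c.rtr_A] at h
    have h2 : c.rst (c.n + m + 1) = (c.A (m + 1)).2 := by
      rw [show c.n + m + 1 = c.n + (m + 1) by omega, c.rst_A]
    rw [hp', h2, A_snd]
    have hred : c.curState (c.P (m + 1)) (m + 1) =
        match (c.P (m + 1) m).1 with
        | some w => c.lts.target w
        | none => (c.P (m + 1) m).2 := rfl
    rw [hred, c.P_lt (show m < m + 1 by omega), h]

/-- Invariant: labels of the run's transitions are in `Act`. -/
lemma run_lab (hfin : c.π.len = (c.n : ℕ∞)) {p : ℕ} {u : Tr} (h : c.rtr p = some u) :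
    c.lts.label u ∈ c.lts.Act := by
  by_cases hp : p < c.n
  · unfold rtr at h
    rw [if_pos hp] at h
    have hu : u = c.π.trans p := (Option.some.inj h).symm
    rw [hu]
    exact c.π.lab_act p (by rw [hfin]; exact_mod_cast hp)
  · have hp' : p = c.n + (p - c.n) := by omega
    rw [hp', c.rtr_A] at h
    exact (c.A_some h).1.1

/-- Invariant: TrB membership of the run's new transitions. -/
lemma run_trb {m : ℕ} {u : Tr} (h : (c.A m).1 = some u) :
    u ∈ c.lts.toLTS.TrB ∧ c.lts.label u ∉ c.B := by
  have hg := c.A_some h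
  exact ⟨hg.1, hg.2.1⟩

/-- The closure property applied along a segment of the run. -/
lemma closure_seg (hfin : c.π.len = (c.n : ℕ∞)) {k m : ℕ} {t : Tr}
    (hk : k ≤ c.n + m) (ht : t ∈ c.Enb (c.rst k))
    (hall : ∀ i, k ≤ i → i < c.n + m → ∃ v, c.rtr i = some v ∧ c.lts.conc t v) :
    ∃ u, u ∈ c.lts.toLTS.TrB ∧ c.lts.source u = c.rst (c.n + m) ∧
      c.lts.label u = c.lts.label t ∧ ¬ c.lts.conc t u := by
  set N := c.n + m - k with hN
  have hdef : ∀ i, i < N → ∃ v, c.rtr (k + i) = some v ∧ c.lts.conc t v := by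
    intro i hi
    exact hall (k + i) (by omega) (by omega)
  choose v hv hcv using hdef
  let σ : c.lts.toLTS.Path :=
    { len := (N : ℕ∞)
      states := fun i => c.rst (k + i)
      trans := fun i => if h : i < N then v i h else c.π.trans 0
      src_eq := by
        intro i hi
        have hi' : i < N := by exact_mod_cast hi
        simp only [dif_pos hi']
        exact c.run_src hfin (hv i hi')
      tgt_eq := by
        intro i hi
        have hi' : i < N := by exact_mod_cast hi
        simp only [dif_pos hi']
        rw [show k + (i + 1) = (k + i) + 1 by omega]
        exact (c.run_tgt hfin (hv i hi')).symm
      lab_act := by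
        intro i hi
        have hi' : i < N := by exact_mod_cast hi
        simp only [dif_pos hi']
        exact c.run_lab hfin (hv i hi') }
  have h0 : σ.states 0 = c.lts.source t := by
    show c.rst (k + 0) = c.lts.source t
    rw [Nat.add_zero]
    exact ht.2.2.symm
  have hconc : ∀ i, i < N → c.lts.conc t (σ.trans i) := by
    intro i hi
    show c.lts.conc t (if h : i < N then v i h else c.π.trans 0)
    rw [dif_pos hi]
    exact hcv i hi
  obtain ⟨u, hu, hsrc, hlab, hnc⟩ := c.lts.conc_closure t ht.1 σ N rfl h0 hconc
  refine ⟨u, hu, ?_, hlab, hnc⟩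
  have : σ.states N = c.rst (c.n + m) := by
    show c.rst (k + N) = c.rst (c.n + m)
    congr 1
    omega
  rw [← this]
  exact hsrc

/-- If the run stops at step `m` (for the first time), no non-blocking transition is
enabled in the final state. -/
lemma stop_empty (hfin : c.π.len = (c.n : ℕ∞)) {m : ℕ} (h : (c.A m).1 = none)
    (h0 : m = 0 ∨ (c.A (m - 1)).1 ≠ none) :
    ∀ w, w ∉ c.Enb (c.rst (c.n + m)) := by
  intro w hw
  apply c.A_none h h0
  have hsr : (c.A m).2 = c.rst (c.n + m) := (c.rst_A m).symm
  by_cases hc : ∃ t, c.enum (c.rst (skF m)) (sjF m) = some t ∧ skF m ≤ c.n + m ∧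
      (∀ i, skF m ≤ i → i < c.n + m → ∃ v, c.rtr i = some v ∧ c.lts.conc t v)
  · obtain ⟨t, het, hk, hC4⟩ := hc
    have htE := c.enum_mem het
    obtain ⟨u, hu, hsrc, hlab, hnc⟩ := c.closure_seg hfin hk htE hC4
    refine ⟨u, hu, ?_, ?_, ?_⟩
    · rw [hlab]; exact htE.2.1
    · rw [hsrc, ← hsr]
    · intro t' het' hk' _
      rw [hsr, c.stLoc_rst hk', het] at het'
      rw [← Option.some.inj het']
      exact hnc
  · refine ⟨w, hw.1, hw.2.1, by rw [hw.2.2, ← hsr], ?_⟩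
    intro t' het' hk' hC4'
    exfalso
    apply hc
    refine ⟨t', ?_, hk', ?_⟩
    · rw [hsr, c.stLoc_rst hk'] at het'
      exact het'
    · intro i h1 h2
      obtain ⟨vv, hvv, hcvv⟩ := hC4' i h1 h2
      rw [c.trLoc_rtr h2] at hvv
      exact ⟨vv, hvv, hcvv⟩

/-- If the run takes a transition `u` at step `m` while the scheduled obligation is
active and undischarged, then `u` discharges it. -/
lemma sched_disch {m : ℕ} {u t : Tr} (hu : (c.A m).1 = some u)
    (hk : skF m ≤ c.n + m) (het : c.enum (c.rst (skF m)) (sjF m) = some t)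
    (hC4 : ∀ i, skF m ≤ i → i < c.n + m → ∃ v, c.rtr i = some v ∧ c.lts.conc t v) :
    ¬ c.lts.conc t u := by
  have hg := c.A_some hu
  have hsr : (c.A m).2 = c.rst (c.n + m) := (c.rst_A m).symm
  refine hg.2.2.2 t ?_ hk ?_
  · rw [hsr, c.stLoc_rst hk]
    exact het
  · intro i h1 h2
    obtain ⟨vv, hvv, hcvv⟩ := hC4 i h1 h2
    rw [← c.trLoc_rtr h2] at hvv
    exact ⟨vv, hvv, hcvv⟩

end Ctx
/-- Theorem 1 (feasibility of justness): if in each state only countably many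
non-blocking transitions (from `Tr•_{¬B}`) are enabled, then every finite path can be
extended into a `B`-just path. -/
theorem bjustness_feasible {S Tr L : Type} (lts : LTSC S Tr L) (B : Set L)
    (hRecB : lts.Rec ⊆ B) (hBAct : B ⊆ lts.Act)
    (hcount : ∀ s : S,
      {t : Tr | t ∈ lts.toLTS.TrB ∧ lts.label t ∉ B ∧ lts.source t = s}.Countable)
    (π : lts.toLTS.Path) (n : ℕ) (hfin : π.len = (n : ℕ∞)) :
    ∃ ρ : lts.toLTS.Path, ρ.Extends π ∧ lts.BJust B ρ := by
  classical
  set c : Ctx S Tr L := ⟨lts, B, hcount, π, n⟩ with hcdef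
  have hcn : c.n = n := rfl
  have hfin' : c.π.len = (c.n : ℕ∞) := hfin
  set Len : ℕ∞ :=
    if hstop : ∃ m, (c.A m).1 = none then ((n + Nat.find hstop : ℕ) : ℕ∞) else ⊤
    with hLen
  -- characterization of definedness
  have hdef : ∀ p : ℕ, ((p : ℕ∞) < Len ↔ ∃ u, c.rtr p = some u) := by
    intro p
    by_cases hstop : ∃ m, (c.A m).1 = none
    · rw [hLen, dif_pos hstop, Nat.cast_lt]
      constructor
      · intro hp
        by_cases hpn : p < n
        · exact ⟨c.π.trans p, by unfold Ctx.rtr; rw [if_pos (show p < c.n from hpn)]⟩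
        · have hm : p - n < Nat.find hstop := by omega
          obtain ⟨u, hu⟩ := Option.ne_none_iff_exists'.mp (Nat.find_min hstop hm)
          refine ⟨u, ?_⟩
          have hp' : p = c.n + (p - n) := by rw [hcn]; omega
          rw [hp', c.rtr_A]
          exact hu
      · rintro ⟨u, hu⟩
        by_cases hpn : p < n
        · omega
        · have hp' : p = c.n + (p - n) := by rw [hcn]; omega
          rw [hp', c.rtr_A] at hu
          have hlt : p - n < Nat.find hstop := by
            by_contra hge
            have habs := c.A_absorb (Nat.find_spec hstop)
              (show Nat.find hstop ≤ p - n by omega)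
            rw [habs] at hu
            exact (Option.some_ne_none u) hu.symm
          omega
    · rw [hLen, dif_neg hstop]
      push_neg at hstop
      constructor
      · intro _
        by_cases hpn : p < n
        · exact ⟨c.π.trans p, by unfold Ctx.rtr; rw [if_pos (show p < c.n from hpn)]⟩
        · have hp' : p = c.n + (p - n) := by rw [hcn]; omega
          obtain ⟨u, hu⟩ := Option.ne_none_iff_exists'.mp (hstop (p - n))
          exact ⟨u, by rw [hp', c.rtr_A]; exact hu⟩
      · intro _
        simp
  have hnle : (n : ℕ∞) ≤ Len := by
    by_cases hstop : ∃ m, (c.A m).1 = none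
    · rw [hLen, dif_pos hstop, Nat.cast_le]; omega
    · rw [hLen, dif_neg hstop]; exact le_top
  refine ⟨⟨Len, c.rst, fun p => (c.rtr p).getD (c.π.trans 0), ?_, ?_, ?_⟩,
    ⟨?_, ?_, ?_⟩, ?_⟩
  · -- src_eq
    intro p hp
    obtain ⟨u, hu⟩ := (hdef p).1 hp
    show c.lts.source ((c.rtr p).getD (c.π.trans 0)) = c.rst p
    rw [hu, Option.getD_some]
    exact c.run_src hfin' hu
  · -- tgt_eq
    intro p hp
    obtain ⟨u, hu⟩ := (hdef p).1 hp
    show c.lts.target ((c.rtr p).getD (c.π.trans 0)) = c.rst (p + 1)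
    rw [hu, Option.getD_some]
    exact (c.run_tgt hfin' hu).symm
  · -- lab_act
    intro p hp
    obtain ⟨u, hu⟩ := (hdef p).1 hp
    show c.lts.label ((c.rtr p).getD (c.π.trans 0)) ∈ c.lts.Act
    rw [hu, Option.getD_some]
    exact c.run_lab hfin' hu
  · -- Extends: length
    show π.len ≤ Len
    rw [hfin]
    exact hnle
  · -- Extends: states
    intro i hi
    rw [hfin] at hi
    have hi' : i ≤ n := by exact_mod_cast hi
    show c.rst i = π.states i
    unfold Ctx.rst
    rw [if_pos (show i ≤ c.n from hi')]
  · -- Extends: transitions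
    intro i hi
    rw [hfin] at hi
    have hi' : i < n := by exact_mod_cast hi
    show (c.rtr i).getD (c.π.trans 0) = π.trans i
    unfold Ctx.rtr
    rw [if_pos (show i < c.n from hi'), Option.getD_some]
  · -- BJust
    intro k hk t htB htnB hsrc
    have hk' : (k : ℕ∞) ≤ Len := hk
    have hsrc' : c.lts.source t = c.rst k := hsrc
    have htE : t ∈ c.Enb (c.rst k) := ⟨htB, htnB, hsrc'⟩
    obtain ⟨j, hj⟩ := c.enum_surj htE
    by_contra hno
    push_neg at hno
    have hno' : ∀ i, k ≤ i → (i : ℕ∞) < Len →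
        lts.conc t ((c.rtr i).getD (c.π.trans 0)) := hno
    by_cases hstop : ∃ m, (c.A m).1 = none
    · -- finite run
      have hLenEq : Len = ((n + Nat.find hstop : ℕ) : ℕ∞) := by
        rw [hLen, dif_pos hstop]
      set m₁ := Nat.find hstop with hm₁
      have hkk : k ≤ n + m₁ := by
        rw [hLenEq] at hk'
        exact_mod_cast hk'
      have h0 : m₁ = 0 ∨ (c.A (m₁ - 1)).1 ≠ none := by
        rcases Nat.eq_zero_or_pos m₁ with h | h
        · exact Or.inl h
        · exact Or.inr (Nat.find_min hstop (by omega))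
      have hall : ∀ i, k ≤ i → i < c.n + m₁ →
          ∃ v, c.rtr i = some v ∧ c.lts.conc t v := by
        intro i h1 h2
        rw [hcn] at h2
        have hilen : (i : ℕ∞) < Len := by
          rw [hLenEq]
          exact_mod_cast h2
        obtain ⟨v, hv⟩ := (hdef i).1 hilen
        refine ⟨v, hv, ?_⟩
        have hcc := hno' i h1 hilen
        rwa [hv, Option.getD_some] at hcc
      obtain ⟨u, hu, hsrcu, hlab, hnc⟩ :=
        c.closure_seg hfin' (show k ≤ c.n + m₁ by rw [hcn]; omega) htE hall
      exact c.stop_empty hfin' (Nat.find_spec hstop) h0 u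
        ⟨hu, by rw [hlab]; exact htE.2.1, hsrcu⟩
    · -- infinite run
      have hLenEq : Len = ⊤ := by rw [hLen, dif_neg hstop]
      push_neg at hstop
      set m := Nat.pair (Nat.pair k j) k with hm
      have hkm : k ≤ m := Nat.right_le_pair _ _
      have hsk : skF m = k := skF_pair k j k
      have hsj : sjF m = j := sjF_pair k j k
      obtain ⟨u, hu⟩ := Option.ne_none_iff_exists'.mp (hstop m)
      have hall : ∀ i, skF m ≤ i → i < c.n + m →
          ∃ v, c.rtr i = some v ∧ c.lts.conc t v := by
        intro i h1 h2
        rw [hsk] at h1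
        have hilen : (i : ℕ∞) < Len := by rw [hLenEq]; simp
        obtain ⟨v, hv⟩ := (hdef i).1 hilen
        refine ⟨v, hv, ?_⟩
        have hcc := hno' i h1 hilen
        rwa [hv, Option.getD_some] at hcc
      have hnc := c.sched_disch hu (by rw [hsk, hcn]; omega)
        (by rw [hsk, hsj]; exact hj) hall
      have hlt : ((c.n + m : ℕ) : ℕ∞) < Len := by rw [hLenEq]; simp
      have hcc := hno' (c.n + m) (by rw [hcn]; omega) hlt
      rw [c.rtr_A, hu, Option.getD_some] at hcc
      exact hnc hcc
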